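/- arXiv:1711.00886 — 4 statements merged into one kernel-verified Lean document; each statement's English description precedes it below -/
import Mathlib

section
/- Let α: G ↷ X be a continuous action of a countable discrete group G on a compact metrizable space X with compatible metric d. Suppose that for every δ > 0 and ε > 0 there is a collection 𝒰 of pairwise disjoint open subsets of X such that diam(U) < δ for every U ∈ 𝒰 and μ(X \ ⋃𝒰) < ε for all μ ∈ M_G(X). Then α has the small boundary property. -/
open MeasureTheory Set Pointwise

variable (G X : Type*)

section Defs

variable [Group G] [MetricSpace X] [MeasurableSpace X] [MulAction G X]

/-- A Borel probability measure is `G`-invariant. -/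
def InvariantMeasure (μ : ProbabilityMeasure X) : Prop :=
  ∀ g : G, MeasureTheory.Measure.map (fun x => g • x) (μ : Measure X) = (μ : Measure X)

/-- `M_G(X)`: the set of `G`-invariant Borel probability measures on `X`. -/
def MG : Set (ProbabilityMeasure X) := {μ | InvariantMeasure G X μ}

/-- `E_G(X)`: the set of ergodic `G`-invariant Borel probability measures on `X`,
i.e. invariant measures giving every `G`-invariant Borel set measure `0` or `1`. -/
def EG : Set (ProbabilityMeasure X) :=
  {μ | InvariantMeasure G X μ ∧
    ∀ A : Set X, MeasurableSet A → (∀ g : G, g • A = A) → μ A = 0 ∨ μ A = 1}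

/-- The action of `G` on `X` is free. -/
def FreeAction : Prop := ∀ (g : G) (x : X), g • x = x → g = 1

/-- The action of `G` on `X` is minimal: there is no proper nonempty closed invariant subset. -/
def MinimalAction : Prop :=
  ∀ C : Set X, IsClosed C → (∀ g : G, g • C ⊆ C) → C = ∅ ∨ C = Set.univ

/-- The small boundary property. -/
def SmallBoundaryProperty : Prop :=
  ∀ (x : X) (U : Set X), IsOpen U → x ∈ U →
    ∃ V : Set X, IsOpen V ∧ x ∈ V ∧ V ⊆ U ∧ ∀ μ ∈ MG G X, μ (frontier V) = 0

/-- `S` is a `(K,δ)`-invariant finite subset of `G`. -/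
def FolnerInv (K : Finset G) (δ : ℝ) (S : Finset G) : Prop :=
  (1 - δ) * (S.card : ℝ) ≤ ({s | s ∈ S ∧ ∀ k ∈ K, k * s ∈ S} : Set G).ncard

/-- `G` is amenable: it admits `(K,δ)`-invariant nonempty finite subsets for all `K, δ`. -/
def AmenableGroup : Prop :=
  ∀ (K : Finset G) (δ : ℝ), 0 < δ → ∃ S : Finset G, S.Nonempty ∧ FolnerInv G K δ S

/-- `(S, V)` is a tower: the translates `s • V`, `s ∈ S`, are pairwise disjoint. -/
def IsTower (S : Finset G) (V : Set X) : Prop :=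
  (S : Set G).Pairwise fun s t => Disjoint (s • V) (t • V)

/-- `F ≺_m O`: subordination with `m`-colored multiplicity. -/
def SubordinateM (m : ℕ) (F O : Set X) : Prop :=
  ∃ (n : ℕ) (U : Fin n → Set X) (s : Fin n → G) (c : Fin n → Fin (m + 1)),
    (∀ k, IsOpen (U k)) ∧ F ⊆ ⋃ k, U k ∧ (∀ k, s k • U k ⊆ O) ∧
    ∀ k l, k ≠ l → c k = c l → Disjoint (s k • U k) (s l • U l)

/-- The action has dynamical `m`-comparison. -/
def HasMComparison (m : ℕ) : Prop :=
  ∀ F O : Set X, IsClosed F → IsOpen O →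
    (∀ μ ∈ MG G X, μ F < μ O) → SubordinateM G X m F O

/-- The action is `m`-almost finite. -/
def MAlmostFinite (m : ℕ) : Prop :=
  ∀ (n : ℕ), 1 ≤ n → ∀ (K : Finset G) (δ : ℝ), 0 < δ →
    ∃ (I : ℕ) (S : Fin I → Finset G) (V : Fin I → Set X) (c : Fin I → Fin (m + 1))
      (S' : Fin I → Finset G),
      (∀ i, IsOpen (V i)) ∧
      (∀ i, IsTower G X (S i) (closure (V i))) ∧
      (∀ i, FolnerInv G K δ (S i)) ∧
      (∀ i, ∀ s ∈ S i, Metric.diam (s • closure (V i)) < δ) ∧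
      (∀ i j, i ≠ j → c i = c j →
        Disjoint ((S i : Set G) • closure (V i)) ((S j : Set G) • closure (V j))) ∧
      (∀ i, S' i ⊆ S i) ∧ (∀ i, ((S' i).card : ℝ) ≤ (S i).card / n) ∧
      SubordinateM G X 0 (Set.univ \ ⋃ i, (S i : Set G) • V i) (⋃ i, (S' i : Set G) • V i)

end Defs

namespace SBPaux

open Metric Filter Topology ENNReal NNReal TopologicalSpace

variable {G X : Type*} [Group G] [MetricSpace X] [CompactSpace X]
  [MeasurableSpace X] [BorelSpace X] [MulAction G X] [ContinuousConstSMul G X]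

lemma measure_smul_eq {μ : ProbabilityMeasure X} (hμ : μ ∈ MG G X) (g : G) {A : Set X}
    (hA : IsOpen A) : (μ : Measure X) (g • A) = (μ : Measure X) A := by
  have h := hμ g
  have hm : Measurable fun x : X => g • x := (continuous_const_smul g).measurable
  have hAm : MeasurableSet (g • A) := (hA.smul g).measurableSet
  calc (μ : Measure X) (g • A)
      = (Measure.map (fun x => g • x) (μ : Measure X)) (g • A) := by rw [h]
    _ = (μ : Measure X) ((fun x => g • x) ⁻¹' (g • A)) := Measure.map_apply hm hAm
    _ = (μ : Measure X) A := by
        congr 1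
        ext y
        simp [Set.smul_mem_smul_set_iff]

lemma unif (F O : Set X) (hF : IsClosed F) (hO : IsOpen O) (γ : ℝ) (hγ : 0 < γ)
    (hyp : ∀ μ ∈ MG G X, (μ : Measure X) F ≤ (μ : Measure X) O + ENNReal.ofReal γ) :
    ∃ δ > (0:ℝ), ∀ μ ∈ MG G X,
      (μ : Measure X) (cthickening δ F) ≤ (μ : Measure X) O + ENNReal.ofReal (2*γ) := by
  by_contra hcon
  push_neg at hcon
  have hsel : ∀ k : ℕ, ∃ μ ∈ MG G X,
      (μ : Measure X) O + ENNReal.ofReal (2*γ) < (μ : Measure X) (cthickening (1/(k+1:ℝ)) F) := by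
    intro k
    obtain ⟨μ, hμ, hlt⟩ := hcon (1/(k+1:ℝ)) (by positivity)
    exact ⟨μ, hμ, hlt⟩
  choose μs hμs hlt using hsel
  set 𝒰 : Ultrafilter ℕ := Ultrafilter.of atTop with h𝒰def
  have h𝒰 : (𝒰 : Filter ℕ) ≤ atTop := Ultrafilter.of_le atTop
  set m : ℕ → Set X → ℝ≥0 := fun k A => ((μs k : Measure X) A).toNNReal with hmdef
  have hLex : ∀ A : Set X, ∃ l : ℝ≥0, Filter.Tendsto (fun k => m k A) 𝒰 (nhds l) := by
    intro A
    have hmem : Set.Icc (0:ℝ≥0) 1 ∈ Filter.map (fun k => m k A) (𝒰 : Filter ℕ) := by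
      refine Filter.mem_map.2 (Filter.Eventually.of_forall fun k => ?_)
      constructor
      · exact zero_le
      · simpa [hmdef] using ENNReal.toNNReal_mono one_ne_top (prob_le_one)
    obtain ⟨l, -, hl⟩ := (isCompact_Icc (a := (0:ℝ≥0)) (b := 1)).ultrafilter_le_nhds
      (Ultrafilter.map (fun k => m k A) 𝒰) (by rwa [Ultrafilter.coe_map, Filter.le_principal_iff])
    exact ⟨l, by rwa [Filter.Tendsto, ← Ultrafilter.coe_map]⟩
  choose L hL using hLex
  have hLuniq : ∀ {A : Set X} {l : ℝ≥0}, Tendsto (fun k => m k A) (𝒰 : Filter ℕ) (𝓝 l) → L A = l :=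
    fun h => tendsto_nhds_unique (hL _) h
  have hLmono : ∀ {A B : Set X}, A ⊆ B → L A ≤ L B := by
    intro A B hAB
    refine le_of_tendsto_of_tendsto (hL A) (hL B) (Filter.Eventually.of_forall fun k => ?_)
    exact ENNReal.toNNReal_mono (measure_ne_top _ _) (measure_mono hAB)
  have hLsub : ∀ A B : Set X, L (A ∪ B) ≤ L A + L B := by
    intro A B
    refine le_of_tendsto_of_tendsto (hL (A ∪ B)) ((hL A).add (hL B))
      (Filter.Eventually.of_forall fun k => ?_)
    have h1 : ((μs k : Measure X)) (A ∪ B) ≤ ((μs k : Measure X)) A + ((μs k : Measure X)) B :=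
      measure_union_le A B
    calc m k (A ∪ B) ≤ (((μs k : Measure X)) A + ((μs k : Measure X)) B).toNNReal :=
          ENNReal.toNNReal_mono (by finiteness) h1
      _ = m k A + m k B := ENNReal.toNNReal_add (measure_ne_top _ _) (measure_ne_top _ _)
  have hLadd : ∀ {A B : Set X}, Disjoint A B → MeasurableSet B → L (A ∪ B) = L A + L B := by
    intro A B hd hB
    refine hLuniq ?_
    have heq : ∀ k, m k (A ∪ B) = m k A + m k B := by
      intro k
      have h1 : ((μs k : Measure X)) (A ∪ B) = ((μs k : Measure X)) A + ((μs k : Measure X)) B :=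
        measure_union hd hB
      simp only [hmdef, h1]
      exact ENNReal.toNNReal_add (measure_ne_top _ _) (measure_ne_top _ _)
    exact (tendsto_congr heq).2 ((hL A).add (hL B))
  have hLuniv : L univ = 1 := by
    refine hLuniq ?_
    have : ∀ k, m k univ = 1 := by
      intro k
      simp [hmdef]
    exact (tendsto_congr this).2 tendsto_const_nhds
  have hLinv : ∀ (g : G) {A : Set X}, IsOpen A → L (g • A) = L A := by
    intro g A hA
    refine hLuniq ?_
    have heq : ∀ k, m k (g • A) = m k A := fun k => by
      simp only [hmdef, measure_smul_eq (hμs k) g hA]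
    exact (tendsto_congr heq).2 (hL A)
  -- the limit content
  set lam : Set X → ℝ≥0∞ := fun K => ⨅ (U : Set X) (_ : IsOpen U ∧ K ⊆ U), (L U : ℝ≥0∞) with hlamdef
  have lam_le : ∀ {K U : Set X}, IsOpen U → K ⊆ U → lam K ≤ (L U : ℝ≥0∞) := by
    intro K U hU hKU
    exact iInf₂_le U ⟨hU, hKU⟩
  have le_lam : ∀ {K : Set X} {c : ℝ≥0∞}, (∀ U : Set X, IsOpen U → K ⊆ U → c ≤ (L U : ℝ≥0∞)) →
      c ≤ lam K := fun h => le_iInf₂ fun U hU => h U hU.1 hU.2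
  have lam_ne_top : ∀ {K : Set X}, lam K ≠ ⊤ :=
    fun {K} => ((lam_le isOpen_univ (subset_univ K)).trans_lt ENNReal.coe_lt_top).ne
  have lam_mono : ∀ {K₁ K₂ : Set X}, K₁ ⊆ K₂ → lam K₁ ≤ lam K₂ := by
    intro K₁ K₂ h
    exact le_lam fun U hU hKU => lam_le hU (h.trans hKU)
  have lam_sub : ∀ K₁ K₂ : Set X, lam (K₁ ∪ K₂) ≤ lam K₁ + lam K₂ := by
    intro K₁ K₂
    refine ENNReal.le_of_forall_pos_le_add fun ε hε _ => ?_
    have hhalf : ((ε/2 : ℝ≥0) : ℝ≥0∞) ≠ 0 := by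
      exact_mod_cast (half_pos hε).ne'
    have h₁ : lam K₁ < lam K₁ + (ε/2 : ℝ≥0) := ENNReal.lt_add_right lam_ne_top hhalf
    have h₂ : lam K₂ < lam K₂ + (ε/2 : ℝ≥0) := ENNReal.lt_add_right lam_ne_top hhalf
    rw [hlamdef] at h₁ h₂
    simp only [iInf_lt_iff] at h₁ h₂
    obtain ⟨U₁, hU₁, hLU₁⟩ := h₁
    obtain ⟨U₂, hU₂, hLU₂⟩ := h₂
    have hle : lam (K₁ ∪ K₂) ≤ (L (U₁ ∪ U₂) : ℝ≥0∞) :=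
      lam_le (hU₁.1.union hU₂.1) (union_subset_union hU₁.2 hU₂.2)
    have hcoe : (L (U₁ ∪ U₂) : ℝ≥0∞) ≤ (L U₁ : ℝ≥0∞) + (L U₂ : ℝ≥0∞) := by
      exact_mod_cast hLsub U₁ U₂
    calc lam (K₁ ∪ K₂) ≤ (L U₁ : ℝ≥0∞) + (L U₂ : ℝ≥0∞) := hle.trans hcoe
      _ ≤ (lam K₁ + (ε/2 : ℝ≥0)) + (lam K₂ + (ε/2 : ℝ≥0)) := add_le_add hLU₁.le hLU₂.le
      _ = lam K₁ + lam K₂ + ε := by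
          rw [add_add_add_comm, ← ENNReal.coe_add, add_halves]
  have lam_disj : ∀ K₁ K₂ : Set X, IsCompact K₁ → IsCompact K₂ → Disjoint K₁ K₂ →
      lam K₁ + lam K₂ ≤ lam (K₁ ∪ K₂) := by
    intro K₁ K₂ hc₁ hc₂ hd
    obtain ⟨W₁, W₂, hW₁, hW₂, hKW₁, hKW₂, hWd⟩ := SeparatedNhds.of_isCompact_isCompact hc₁ hc₂ hd
    refine le_lam fun U hU hKU => ?_
    have e : L ((U ∩ W₁) ∪ (U ∩ W₂)) = L (U ∩ W₁) + L (U ∩ W₂) :=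
      hLadd (hWd.mono inter_subset_right inter_subset_right) (hU.inter hW₂).measurableSet
    have h1 : lam K₁ ≤ (L (U ∩ W₁) : ℝ≥0∞) :=
      lam_le (hU.inter hW₁) (subset_inter (subset_union_left.trans hKU) hKW₁)
    have h2 : lam K₂ ≤ (L (U ∩ W₂) : ℝ≥0∞) :=
      lam_le (hU.inter hW₂) (subset_inter (subset_union_right.trans hKU) hKW₂)
    calc lam K₁ + lam K₂ ≤ (L (U ∩ W₁) : ℝ≥0∞) + (L (U ∩ W₂) : ℝ≥0∞) := add_le_add h1 h2
      _ = (L ((U ∩ W₁) ∪ (U ∩ W₂)) : ℝ≥0∞) := by rw [e, ENNReal.coe_add]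
      _ ≤ (L U : ℝ≥0∞) := by
          exact_mod_cast hLmono (union_subset inter_subset_left inter_subset_left)
  -- package as a Content
  set Lam : Content X := {
    toFun := fun K => (lam (K : Set X)).toNNReal
    mono' := fun K₁ K₂ h => ENNReal.toNNReal_mono lam_ne_top (lam_mono h)
    sup_disjoint' := fun K₁ K₂ hd _ _ => by
      have he : lam ((K₁ : Set X) ∪ (K₂ : Set X)) = lam K₁ + lam K₂ :=
        le_antisymm (lam_sub _ _) (lam_disj _ _ K₁.2 K₂.2 hd)
      simp only [Compacts.coe_sup]
      rw [he]
      exact ENNReal.toNNReal_add lam_ne_top lam_ne_top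
    sup_le' := fun K₁ K₂ => by
      have h1 : lam ((K₁ : Set X) ∪ (K₂ : Set X)) ≤ lam K₁ + lam K₂ := lam_sub _ _
      have := ENNReal.toNNReal_mono (by simp [lam_ne_top]) h1
      simpa [ENNReal.toNNReal_add lam_ne_top lam_ne_top, Compacts.coe_sup] using this } with hLamdef
  have hLamcoe : ∀ K : Compacts X, (Lam K : ℝ≥0∞) = lam (K : Set X) := by
    intro K
    show ((Lam.toFun K : ℝ≥0) : ℝ≥0∞) = lam (K : Set X)
    rw [hLamdef]
    exact ENNReal.coe_toNNReal lam_ne_top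
  have hreg : Lam.ContentRegular := by
    intro K
    refine le_antisymm (le_iInf fun K' => le_iInf fun hK' => ?_) ?_
    · rw [hLamcoe, hLamcoe]
      exact lam_mono (hK'.trans interior_subset)
    · refine ENNReal.le_of_forall_pos_le_add fun ε hε _ => ?_
      have hlt2 : lam (K : Set X) < lam (K : Set X) + ε :=
        ENNReal.lt_add_right lam_ne_top (by exact_mod_cast hε.ne')
      rw [hlamdef] at hlt2
      simp only [iInf_lt_iff] at hlt2
      obtain ⟨U, hU, hLU⟩ := hlt2
      obtain ⟨δ, hδpos, hsub⟩ := K.2.exists_cthickening_subset_open hU.1 hU.2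
      have hKcpt : IsCompact (cthickening δ (K : Set X)) := isClosed_cthickening.isCompact
      have hKint : (K : Set X) ⊆ interior (cthickening δ (K : Set X)) :=
        (self_subset_thickening hδpos _).trans
          (interior_maximal (thickening_subset_cthickening δ _) isOpen_thickening)
      refine iInf₂_le_of_le (⟨cthickening δ (K : Set X), hKcpt⟩ : Compacts X) hKint ?_
      show (Lam (⟨cthickening δ (K : Set X), hKcpt⟩ : Compacts X) : ℝ≥0∞) ≤ (Lam K : ℝ≥0∞) + ε
      rw [hLamcoe, hLamcoe]
      exact (lam_le hU.1 hsub).trans hLU.le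
  set ν : Measure X := Lam.measure with hνdef
  have hν_compacts : ∀ K : Compacts X, ν (K : Set X) = lam (K : Set X) := by
    intro K
    rw [hνdef, Lam.measure_eq_content_of_regular hreg K, hLamcoe]
  have lam_univ : lam (univ : Set X) = 1 := by
    refine le_antisymm ?_ (le_lam fun U hU hsub => ?_)
    · calc lam (univ : Set X) ≤ (L univ : ℝ≥0∞) := lam_le isOpen_univ subset_rfl
        _ = 1 := by rw [hLuniv]; rfl
    · rw [univ_subset_iff.mp hsub, hLuniv]
      exact le_refl _
  have hν_univ : ν univ = 1 := by
    have := hν_compacts ⟨univ, isCompact_univ⟩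
    simpa [lam_univ] using this
  have hν_prob : IsProbabilityMeasure ν := ⟨hν_univ⟩
  -- invariance
  have lam_inv : ∀ (g : G) (A : Set X), lam (g • A) = lam A := by
    intro g A
    refine le_antisymm (le_lam fun U hU hKU => ?_) (le_lam fun U hU hKU => ?_)
    · have h1 : lam (g • A) ≤ (L (g • U) : ℝ≥0∞) :=
        lam_le (hU.smul g) (smul_set_mono hKU)
      rw [hLinv g hU] at h1
      exact h1
    · have hsub : A ⊆ g⁻¹ • U := by
        intro a ha
        rw [Set.mem_smul_set_iff_inv_smul_mem]
        simpa using hKU (Set.smul_mem_smul_set ha)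
      have h1 : lam A ≤ (L (g⁻¹ • U) : ℝ≥0∞) := lam_le (hU.smul g⁻¹) hsub
      rw [hLinv g⁻¹ hU] at h1
      exact h1
  have hLam_inv : ∀ (g : G), ∀ ⦃K : Compacts X⦄,
      Lam (K.map _ (Homeomorph.smul (α := X) g).continuous) = Lam K := by
    intro g K
    rw [hLamcoe, hLamcoe]
    have h2 : ((K.map _ (Homeomorph.smul (α := X) g).continuous : Compacts X) : Set X)
        = g • (K : Set X) := by
      rw [Compacts.coe_map, ← Set.image_smul]
      rfl
    rw [h2, lam_inv]
  have hνinv : ∀ g : G, Measure.map (fun x => g • x) ν = ν := by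
    intro g
    refine Measure.ext fun s hs => ?_
    have hmeas : Measurable fun x : X => g • x := (continuous_const_smul g).measurable
    rw [Measure.map_apply hmeas hs, hνdef, Lam.measure_apply (hs.preimage hmeas),
      Lam.measure_apply hs]
    exact Lam.outerMeasure_preimage (Homeomorph.smul g) (hLam_inv g) s
  -- the limit measure is an invariant probability measure
  set νP : ProbabilityMeasure X := ⟨ν, hν_prob⟩ with hνPdef
  have hνP : νP ∈ MG G X := fun g => hνinv g
  have hFcpt : IsCompact F := hF.isCompact
  -- lower bound for lam F
  have hlow : (L O : ℝ≥0∞) + ENNReal.ofReal (2*γ) ≤ lam F := by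
    refine le_lam fun U hU hFU => ?_
    obtain ⟨δ₀, hδ₀, hsub⟩ := hFcpt.exists_cthickening_subset_open hU hFU
    have hev : ∀ᶠ k in (𝒰 : Filter ℕ), m k O + Real.toNNReal (2*γ) ≤ m k U := by
      have hev0 : ∀ᶠ k : ℕ in atTop, (1:ℝ)/((k:ℝ)+1) ≤ δ₀ := by
        obtain ⟨N, hN⟩ := exists_nat_gt (1/δ₀)
        refine Filter.eventually_atTop.2 ⟨N, fun k hk => ?_⟩
        have hk1 : (0:ℝ) < (k:ℝ)+1 := by positivity
        rw [div_le_iff₀ hk1]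
        rw [div_lt_iff₀ hδ₀] at hN
        have hNk : (N:ℝ) ≤ (k:ℝ)+1 := by
          have h5 : (N:ℝ) ≤ (k:ℝ) := by exact_mod_cast hk
          linarith
        nlinarith
      refine (hev0.filter_mono h𝒰).mono fun k hk => ?_
      have h1 : ((μs k : Measure X)) O + ENNReal.ofReal (2*γ) ≤ ((μs k : Measure X)) U := by
        refine le_trans (hlt k).le (measure_mono ?_)
        exact (cthickening_mono hk F).trans hsub
      have h2 := ENNReal.toNNReal_mono (measure_ne_top _ _) h1
      have h6 : (ENNReal.ofReal (2*γ)).toNNReal = Real.toNNReal (2*γ) := rfl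
      rwa [ENNReal.toNNReal_add (measure_ne_top _ _) ENNReal.ofReal_ne_top, h6] at h2
    have hNN : L O + Real.toNNReal (2*γ) ≤ L U :=
      le_of_tendsto_of_tendsto ((hL O).add tendsto_const_nhds) (hL U) hev
    calc (L O : ℝ≥0∞) + ENNReal.ofReal (2*γ) = ((L O + Real.toNNReal (2*γ) : ℝ≥0) : ℝ≥0∞) := by
          rw [ENNReal.coe_add]
          rfl
      _ ≤ (L U : ℝ≥0∞) := by exact_mod_cast hNN
  -- upper bound for ν O
  have hup : ν O ≤ (L O : ℝ≥0∞) := by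
    rw [hνdef, Lam.measure_apply hO.measurableSet, Lam.outerMeasure_of_isOpen O hO]
    rw [Content.innerContent]
    refine iSup₂_le fun K hK => ?_
    rw [hLamcoe]
    exact lam_le hO hK
  have hcontr : (L O : ℝ≥0∞) + ENNReal.ofReal (2*γ) ≤ (L O : ℝ≥0∞) + ENNReal.ofReal γ := by
    have h1 : lam F ≤ ν O + ENNReal.ofReal γ := by
      have h2 := hyp νP hνP
      have h3 : (νP : Measure X) = ν := rfl
      rw [h3] at h2
      have h4 : ν F = lam F := hν_compacts ⟨F, hFcpt⟩
      rwa [h4] at h2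
    exact (hlow.trans h1).trans (add_le_add_left hup _)
  have h2γ : ENNReal.ofReal (2*γ) ≤ ENNReal.ofReal γ :=
    (ENNReal.add_le_add_iff_left ENNReal.coe_ne_top).mp hcontr
  rw [ENNReal.ofReal_le_ofReal_iff hγ.le] at h2γ
  linarith



lemma step_ex
    (h : ∀ δ > (0 : ℝ), ∀ ε > (0 : ℝ), ∃ 𝒰 : Set (Set X),
      (∀ U ∈ 𝒰, IsOpen U) ∧ (∀ U ∈ 𝒰, Metric.diam U < δ) ∧ 𝒰.Pairwise Disjoint ∧
      ∀ μ ∈ MG G X, (μ (Set.univ \ ⋃₀ 𝒰) : ℝ) < ε)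
    (V : Set X) (γ β : ℝ) (hV : IsOpen V) (hγ : 0 < γ) (hβ : 0 < β)
    (hI2 : ∀ μ ∈ MG G X, (μ : Measure X) (closure V) ≤ (μ : Measure X) V + ENNReal.ofReal γ) :
    ∃ (W : Set X) (η : ℝ),
      IsOpen W ∧ 0 < η ∧ 2*η ≤ β ∧
      V ⊆ W ∧ W ⊆ cthickening η V ∧
      (∀ μ ∈ MG G X, (μ : Measure X) (closure W) ≤ (μ : Measure X) W + ENNReal.ofReal (γ/2)) ∧
      (∀ μ ∈ MG G X, (μ : Measure X) (cthickening (4*η) V)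
        ≤ (μ : Measure X) V + ENNReal.ofReal (2*γ)) ∧
      ∃ 𝒰 : Set (Set X), (∀ B ∈ 𝒰, IsOpen B) ∧ (∀ B ∈ 𝒰, Metric.diam B < η) ∧
        (∀ B ∈ 𝒰, (B ∩ V).Nonempty → B ⊆ W) ∧
        (∀ μ ∈ MG G X, (μ : Measure X) (Set.univ \ ⋃₀ 𝒰) ≤ ENNReal.ofReal (γ/2)) := by
  obtain ⟨δ₀, hδ₀pos, hδ₀⟩ := unif (closure V) V isClosed_closure hV γ hγ hI2
  set η : ℝ := min (δ₀/4) (β/2) with hηdef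
  have hηpos : 0 < η := lt_min (by linarith) (by linarith)
  have hηβ : 2*η ≤ β := by
    have h1 := min_le_right (δ₀/4) (β/2)
    rw [← hηdef] at h1
    linarith
  have hthick : ∀ μ ∈ MG G X, (μ : Measure X) (cthickening (4*η) V)
      ≤ (μ : Measure X) V + ENNReal.ofReal (2*γ) := by
    intro μ hμ
    have h4η : 4*η ≤ δ₀ := by
      have h1 := min_le_left (δ₀/4) (β/2)
      rw [← hηdef] at h1
      linarith
    refine le_trans (measure_mono ?_) (hδ₀ μ hμ)
    calc cthickening (4*η) V ⊆ cthickening δ₀ V := cthickening_mono h4η V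
      _ = cthickening δ₀ (closure V) := cthickening_closure.symm
  obtain ⟨𝒰, h𝒰open, h𝒰diam, h𝒰disj, h𝒰meas⟩ := h η hηpos (γ/2) (by linarith)
  set W : Set X := V ∪ ⋃₀ {B | B ∈ 𝒰 ∧ (B ∩ V).Nonempty} with hWdef
  have hWopen : IsOpen W := hV.union (isOpen_sUnion fun B hB => h𝒰open B hB.1)
  have hVW : V ⊆ W := subset_union_left
  have hWsub : W ⊆ cthickening η V := by
    rw [hWdef]
    refine union_subset (self_subset_cthickening V) (sUnion_subset fun B hB => ?_)
    obtain ⟨p, hpB, hpV⟩ := hB.2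
    intro y hy
    have hbd : Bornology.IsBounded B := isCompact_univ.isBounded.subset (subset_univ B)
    have hd : dist y p ≤ η := (dist_le_diam_of_mem hbd hy hpB).trans (h𝒰diam B hB.1).le
    exact mem_cthickening_of_dist_le y p η V hpV hd
  have hsat : ∀ B ∈ 𝒰, (B ∩ V).Nonempty → B ⊆ W := by
    intro B hB hne
    rw [hWdef]
    have hmem : B ∈ {B | B ∈ 𝒰 ∧ (B ∩ V).Nonempty} := ⟨hB, hne⟩
    exact (subset_sUnion_of_mem hmem).trans subset_union_right
  have hZ : ∀ μ ∈ MG G X, (μ : Measure X) (univ \ ⋃₀ 𝒰) ≤ ENNReal.ofReal (γ/2) := by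
    intro μ hμ
    have h1 := h𝒰meas μ hμ
    have h2 : ((μ (univ \ ⋃₀ 𝒰) : ℝ≥0) : ℝ≥0∞) = (μ : Measure X) (univ \ ⋃₀ 𝒰) :=
      μ.ennreal_coeFn_eq_coeFn_toMeasure _
    rw [← h2]
    rw [ENNReal.ofReal]
    exact ENNReal.coe_le_coe.2 ((Real.le_toNNReal_iff_coe_le (by linarith)).2 h1.le)
  have hfr : frontier W ⊆ univ \ ⋃₀ 𝒰 := by
    intro y hy
    rw [hWopen.frontier_eq] at hy
    obtain ⟨hyc, hyW⟩ := hy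
    refine ⟨trivial, fun hy2 => ?_⟩
    obtain ⟨B, hB, hyB⟩ := hy2
    obtain ⟨p, hpB, hpW⟩ := mem_closure_iff.1 hyc B (h𝒰open B hB) hyB
    rcases hpW with hpV | hpU
    · exact hyW (hsat B hB ⟨p, hpB, hpV⟩ hyB)
    · obtain ⟨C, hC, hpC⟩ := hpU
      by_cases hBC : B = C
      · exact hyW (hsat B hB (hBC ▸ hC.2) hyB)
      · exact (h𝒰disj hB hC.1 hBC).le_bot ⟨hpB, hpC⟩
  have hI2' : ∀ μ ∈ MG G X, (μ : Measure X) (closure W)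
      ≤ (μ : Measure X) W + ENNReal.ofReal (γ/2) := by
    intro μ hμ
    have hsub2 : closure W ⊆ W ∪ (univ \ ⋃₀ 𝒰) := by
      intro y hy
      by_cases hyW : y ∈ W
      · exact Or.inl hyW
      · exact Or.inr (hfr (by rw [hWopen.frontier_eq]; exact ⟨hy, hyW⟩))
    refine le_trans (measure_mono hsub2) ((measure_union_le _ _).trans ?_)
    exact add_le_add_right (hZ μ hμ) _
  exact ⟨W, η, hWopen, hηpos, hηβ, hVW, hWsub, hI2', hthick,
    𝒰, h𝒰open, fun B hB => h𝒰diam B hB, hsat, hZ⟩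

lemma main_ex
    (h : ∀ δ > (0 : ℝ), ∀ ε > (0 : ℝ), ∃ 𝒰 : Set (Set X),
      (∀ U ∈ 𝒰, IsOpen U) ∧ (∀ U ∈ 𝒰, Metric.diam U < δ) ∧ 𝒰.Pairwise Disjoint ∧
      ∀ μ ∈ MG G X, (μ (Set.univ \ ⋃₀ 𝒰) : ℝ) < ε)
    (x : X) (U : Set X) (hU : IsOpen U) (hxU : x ∈ U) :
    ∃ V : Set X, IsOpen V ∧ x ∈ V ∧ V ⊆ U ∧
      ∀ μ ∈ MG G X, (μ : Measure X) (frontier V) = 0 := by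
  obtain ⟨ε₀, hε₀pos, hball⟩ := Metric.isOpen_iff.1 hU x hxU
  set ρ : ℝ := ε₀/4 with hρdef
  have hρpos : 0 < ρ := by positivity
  have hcb : Metric.closedBall x (3*ρ) ⊆ U := by
    refine (Metric.closedBall_subset_ball ?_).trans hball
    rw [hρdef]; linarith
  classical
  -- the state predicate and the link relation
  set P : Set X × ℝ × ℝ → Prop := fun s =>
    IsOpen s.1 ∧ 0 < s.2.1 ∧ 0 < s.2.2 ∧
    ∀ μ ∈ MG G X, (μ : Measure X) (closure s.1) ≤ (μ : Measure X) s.1 + ENNReal.ofReal s.2.1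
    with hPdef
  set Lk : (Set X × ℝ × ℝ) → (Set X × ℝ × ℝ) → Prop := fun s t =>
    2*t.2.2 ≤ s.2.2 ∧ t.2.1 = s.2.1/2 ∧ s.1 ⊆ t.1 ∧ t.1 ⊆ cthickening t.2.2 s.1 ∧
    (∀ μ ∈ MG G X, (μ : Measure X) (cthickening (4*t.2.2) s.1)
       ≤ (μ : Measure X) s.1 + ENNReal.ofReal (2*s.2.1)) ∧
    ∃ 𝒰 : Set (Set X), (∀ B ∈ 𝒰, IsOpen B) ∧ (∀ B ∈ 𝒰, Metric.diam B < t.2.2) ∧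
      (∀ B ∈ 𝒰, (B ∩ s.1).Nonempty → B ⊆ t.1) ∧
      (∀ μ ∈ MG G X, (μ : Measure X) (Set.univ \ ⋃₀ 𝒰) ≤ ENNReal.ofReal (s.2.1/2))
    with hLkdef
  have hstep : ∀ s : {s : Set X × ℝ × ℝ // P s}, ∃ t : {t : Set X × ℝ × ℝ // P t}, Lk s.1 t.1 := by
    rintro ⟨⟨V, γ, β⟩, hPV⟩
    obtain ⟨W, η, hWopen, hηpos, hηβ, hVW, hWsub, hI2', hthick, 𝒰, a1, a2, a3, a4⟩ :=
      step_ex h V γ β hPV.1 hPV.2.1 hPV.2.2.1 hPV.2.2.2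
    have hγpos : (0:ℝ) < γ := hPV.2.1
    refine ⟨⟨(W, γ/2, η), hWopen, by linarith, hηpos, hI2'⟩, ?_⟩
    exact ⟨hηβ, rfl, hVW, hWsub, hthick, 𝒰, a1, a2, a3, a4⟩
  choose stepF hstepF using hstep
  have hP0 : P (Metric.ball x ρ, 2, ρ) := by
    refine ⟨Metric.isOpen_ball, by norm_num, hρpos, ?_⟩
    intro μ hμ
    have h1 : (μ : Measure X) (closure (Metric.ball x ρ)) ≤ 1 := prob_le_one
    have h2 : (1:ℝ≥0∞) ≤ ENNReal.ofReal 2 := by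
      rw [show ((1:ℝ≥0∞)) = ENNReal.ofReal 1 by simp]
      exact ENNReal.ofReal_le_ofReal (by norm_num)
    exact h1.trans (h2.trans le_add_self)
  set T : ℕ → {s : Set X × ℝ × ℝ // P s} :=
    fun n => Nat.rec ⟨(Metric.ball x ρ, 2, ρ), hP0⟩ (fun _ s => stepF s) n with hTdef
  have hlink : ∀ n, Lk (T n).1 (T (n+1)).1 := fun n => hstepF (T n)
  set Vs : ℕ → Set X := fun n => (T n).1.1 with hVsdef
  set gs : ℕ → ℝ := fun n => (T n).1.2.1 with hgsdef
  set bs : ℕ → ℝ := fun n => (T n).1.2.2 with hbsdef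
  have hVs0 : Vs 0 = Metric.ball x ρ := rfl
  have hbs0 : bs 0 = ρ := rfl
  have hVopen : ∀ n, IsOpen (Vs n) := fun n => (T n).2.1
  have hgpos : ∀ n, 0 < gs n := fun n => (T n).2.2.1
  have hbpos : ∀ n, 0 < bs n := fun n => (T n).2.2.2.1
  have hI2s : ∀ n, ∀ μ ∈ MG G X,
      (μ : Measure X) (closure (Vs n)) ≤ (μ : Measure X) (Vs n) + ENNReal.ofReal (gs n) :=
    fun n => (T n).2.2.2.2
  have hbhalf : ∀ n, 2*bs (n+1) ≤ bs n := fun n => (hlink n).1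
  have hghalf : ∀ n, gs (n+1) = gs n / 2 := fun n => (hlink n).2.1
  have hVmono : ∀ n, Vs n ⊆ Vs (n+1) := fun n => (hlink n).2.2.1
  have hVstep : ∀ n, Vs (n+1) ⊆ cthickening (bs (n+1)) (Vs n) := fun n => (hlink n).2.2.2.1
  have hVmono' : ∀ n m, n ≤ m → Vs n ⊆ Vs m := by
    intro n m hnm
    induction m with
    | zero => rw [Nat.le_zero.1 hnm]
    | succ m ih =>
        rcases Nat.lt_or_ge n (m+1) with h1 | h1
        · exact (ih (Nat.lt_succ_iff.1 h1)).trans (hVmono m)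
        · rw [Nat.le_antisymm hnm h1]
  have hgs : ∀ n, gs n = 2*(1/2:ℝ)^n := by
    intro n
    induction n with
    | zero =>
        have h0 : gs 0 = 2 := rfl
        rw [h0]; norm_num
    | succ n ih => rw [hghalf n, ih]; ring
  have hbmono : ∀ n m, n ≤ m → bs m ≤ bs n := by
    intro n m hnm
    induction m with
    | zero => rw [Nat.le_zero.1 hnm]
    | succ m ih =>
        rcases Nat.lt_or_ge n (m+1) with h1 | h1
        · have h2 := hbhalf m
          have h3 := hbpos (m+1)
          have h4 := ih (Nat.lt_succ_iff.1 h1)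
          linarith
        · rw [Nat.le_antisymm hnm h1]
  have hclaim : ∀ n m, Vs (n+m) ⊆ cthickening (2*bs (n+1) - 2*bs (n+m+1)) (Vs n) := by
    intro n m
    induction m with
    | zero =>
        have he : 2*bs (n+1) - 2*bs (n+0+1) = 0 := by norm_num
        rw [he, cthickening_zero]
        exact subset_closure
    | succ m ih =>
        have hRnonneg : 0 ≤ 2*bs (n+1) - 2*bs (n+m+1) := by
          have h5 := hbmono (n+1) (n+m+1) (by omega)
          linarith
        have h1 : Vs (n+m+1) ⊆ cthickening (bs (n+m+1)) (Vs (n+m)) := hVstep (n+m)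
        have h2 := cthickening_subset_of_subset (bs (n+m+1)) ih
        have h3 := cthickening_cthickening_subset (hbpos (n+m+1)).le hRnonneg (Vs n)
        have h4 : bs (n+m+1) + (2*bs (n+1) - 2*bs (n+m+1)) ≤ 2*bs (n+1) - 2*bs (n+m+2) := by
          have h6 := hbhalf (n+m+1)
          linarith
        exact ((h1.trans h2).trans h3).trans (cthickening_mono h4 _)
  have hVsub : ∀ n m, Vs m ⊆ cthickening (2*bs (n+1)) (Vs n) := by
    intro n m
    rcases le_or_gt n m with h1 | h1
    · obtain ⟨k, rfl⟩ := Nat.exists_eq_add_of_le h1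
      refine (hclaim n k).trans (cthickening_mono ?_ _)
      have := hbpos (n+k+1)
      linarith
    · exact (hVmono' m n h1.le).trans
        ((self_subset_cthickening _).trans (cthickening_mono (le_refl _) _))
  set V : Set X := ⋃ n, Vs n with hVdef
  have hVopen' : IsOpen V := isOpen_iUnion hVopen
  have hxV : x ∈ V := mem_iUnion.2 ⟨0, by rw [hVs0]; exact Metric.mem_ball_self hρpos⟩
  have hVU : V ⊆ U := by
    refine subset_trans ?_ hcb
    refine iUnion_subset fun m => ?_
    refine (hVsub 0 m).trans ?_
    intro y hy
    have h2b : 2*bs 1 ≤ ρ := by rw [← hbs0]; exact hbhalf 0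
    have h1 : y ∈ cthickening ρ (Vs 0) := cthickening_mono h2b _ hy
    rw [hVs0] at h1
    rw [Metric.mem_closedBall]
    have h2 : EMetric.infEdist y (Metric.ball x ρ) ≤ ENNReal.ofReal ρ := mem_cthickening_iff.1 h1
    have h3 : ∀ ε : ℝ, 0 < ε → dist y x < 2*ρ + ε := by
      intro ε hε
      have h4 : EMetric.infEdist y (Metric.ball x ρ) < ENNReal.ofReal (ρ + ε) :=
        lt_of_le_of_lt h2 ((ENNReal.ofReal_lt_ofReal_iff (by linarith)).2 (by linarith))
      obtain ⟨z, hz, hyz⟩ := EMetric.infEdist_lt_iff.1 h4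
      have h5 : dist y z < ρ + ε := edist_lt_ofReal.1 hyz
      have h6 : dist z x < ρ := Metric.mem_ball.1 hz
      calc dist y x ≤ dist y z + dist z x := dist_triangle y z x
        _ < 2*ρ + ε := by linarith
    have h7 : dist y x ≤ 2*ρ := by
      by_contra hc
      push_neg at hc
      have := h3 ((dist y x - 2*ρ)/2) (by linarith)
      linarith
    linarith
  refine ⟨V, hVopen', hxV, hVU, ?_⟩
  intro μ hμ
  have hkey : ∀ n, (μ : Measure X) (frontier V) ≤ ENNReal.ofReal (3 * gs n) := by
    intro n
    obtain ⟨𝒰, a1, a2, a3, a4⟩ := (hlink n).2.2.2.2.2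
    have hsub : frontier V ⊆ (univ \ ⋃₀ 𝒰) ∪ (cthickening (4*bs (n+1)) (Vs n) \ Vs n) := by
      intro y hy
      rw [hVopen'.frontier_eq] at hy
      obtain ⟨hyc, hyV⟩ := hy
      by_cases hyZ : y ∈ ⋃₀ 𝒰
      swap
      · exact Or.inl ⟨trivial, hyZ⟩
      obtain ⟨B, hB, hyB⟩ := hyZ
      obtain ⟨p, hpB, hpV⟩ := mem_closure_iff.1 hyc B (a1 B hB) hyB
      by_cases hBV : (B ∩ Vs n).Nonempty
      · exact absurd (mem_iUnion.2 ⟨n+1, a3 B hB hBV hyB⟩) hyV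
      · refine Or.inr ⟨?_, fun hyVn => hyV (mem_iUnion.2 ⟨n, hyVn⟩)⟩
        rw [mem_cthickening_iff]
        obtain ⟨mm, hpm⟩ := mem_iUnion.1 hpV
        have h8 : EMetric.infEdist p (Vs n) ≤ ENNReal.ofReal (2*bs (n+1)) :=
          mem_cthickening_iff.1 (hVsub n mm hpm)
        have hbd : Bornology.IsBounded B := isCompact_univ.isBounded.subset (subset_univ B)
        have h9 : edist y p ≤ ENNReal.ofReal (bs (n+1)) := by
          rw [edist_dist]
          exact ENNReal.ofReal_le_ofReal
            ((dist_le_diam_of_mem hbd hyB hpB).trans (a2 B hB).le)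
        have hb1 := hbpos (n+1)
        calc EMetric.infEdist y (Vs n) ≤ edist y p + EMetric.infEdist p (Vs n) :=
              EMetric.infEdist_le_edist_add_infEdist
          _ ≤ ENNReal.ofReal (bs (n+1)) + ENNReal.ofReal (2*bs (n+1)) := add_le_add h9 h8
          _ = ENNReal.ofReal (bs (n+1) + 2*bs (n+1)) :=
              (ENNReal.ofReal_add hb1.le (by linarith)).symm
          _ ≤ ENNReal.ofReal (4*bs (n+1)) := ENNReal.ofReal_le_ofReal (by linarith)
    have hdiff : (μ : Measure X) (cthickening (4*bs (n+1)) (Vs n) \ Vs n)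
        ≤ ENNReal.ofReal (2 * gs n) := by
      have h1 := (hlink n).2.2.2.2.1 μ hμ
      have h2 : (μ : Measure X) (cthickening (4*bs (n+1)) (Vs n) \ Vs n)
          = (μ : Measure X) (cthickening (4*bs (n+1)) (Vs n)) - (μ : Measure X) (Vs n) :=
        measure_diff (self_subset_cthickening _) (hVopen n).measurableSet.nullMeasurableSet
          (measure_ne_top _ _)
      rw [h2, tsub_le_iff_right]
      exact h1.trans (le_of_eq (add_comm _ _))
    have hgn := hgpos n
    calc (μ : Measure X) (frontier V)
        ≤ (μ : Measure X) ((univ \ ⋃₀ 𝒰) ∪ (cthickening (4*bs (n+1)) (Vs n) \ Vs n)) :=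
          measure_mono hsub
      _ ≤ (μ : Measure X) (univ \ ⋃₀ 𝒰)
          + (μ : Measure X) (cthickening (4*bs (n+1)) (Vs n) \ Vs n) := measure_union_le _ _
      _ ≤ ENNReal.ofReal (gs n / 2) + ENNReal.ofReal (2 * gs n) := add_le_add (a4 μ hμ) hdiff
      _ = ENNReal.ofReal (gs n / 2 + 2 * gs n) :=
          (ENNReal.ofReal_add (by linarith) (by linarith)).symm
      _ ≤ ENNReal.ofReal (3 * gs n) := ENNReal.ofReal_le_ofReal (by linarith)
  have htend : Filter.Tendsto (fun n => ENNReal.ofReal (3 * gs n)) atTop (𝓝 0) := by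
    have hr : Filter.Tendsto (fun n : ℕ => 3 * gs n) atTop (𝓝 0) := by
      have h0 : Filter.Tendsto (fun n : ℕ => (1/2:ℝ)^n) atTop (𝓝 0) :=
        tendsto_pow_atTop_nhds_zero_of_lt_one (by norm_num) (by norm_num)
      have h1 : Filter.Tendsto (fun n : ℕ => 6 * (1/2:ℝ)^n) atTop (𝓝 (6*0)) := h0.const_mul 6
      simp only [mul_zero] at h1
      refine h1.congr fun n => ?_
      rw [hgs n]; ring
    have h2 := ENNReal.tendsto_ofReal hr
    simpa using h2
  have hzero : (μ : Measure X) (frontier V) ≤ 0 :=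
    ge_of_tendsto htend (Filter.Eventually.of_forall hkey)
  exact le_antisymm hzero zero_le

end SBPaux

/-- If for all `δ, ε > 0` there is a collection of pairwise disjoint open sets of
diameter `< δ` whose union has complement of measure `< ε` for every invariant measure, then
the action has the small boundary property. -/
theorem smallBoundaryProperty_of_disjoint_open_covers
    {G X : Type*} [Group G] [Countable G]
    [MetricSpace X] [CompactSpace X]
    [MeasurableSpace X] [BorelSpace X]
    [MulAction G X] [ContinuousConstSMul G X]
    (h : ∀ δ > (0 : ℝ), ∀ ε > (0 : ℝ), ∃ 𝒰 : Set (Set X),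
      (∀ U ∈ 𝒰, IsOpen U) ∧
      (∀ U ∈ 𝒰, Metric.diam U < δ) ∧
      𝒰.Pairwise Disjoint ∧
      ∀ μ ∈ MG G X, (μ (Set.univ \ ⋃₀ 𝒰) : ℝ) < ε) :
    SmallBoundaryProperty G X := by
  intro x U hU hxU
  obtain ⟨V, hVopen, hxV, hVU, hV0⟩ := SBPaux.main_ex h x U hU hxU
  refine ⟨V, hVopen, hxV, hVU, fun μ hμ => ?_⟩
  have h1 := hV0 μ hμ
  have h2 : ((μ (frontier V) : NNReal) : ENNReal) = (μ : Measure X) (frontier V) :=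
    μ.ennreal_coeFn_eq_coeFn_toMeasure _
  rw [h1] at h2
  exact_mod_cast h2
end

section
/- Let α: G ↷ X be a continuous action of a countable discrete group G on a compact metrizable space X with compatible metric d. Suppose that for every δ > 0 and ε > 0 there is a collection 𝒰 of pairwise disjoint open subsets of X such that diam(U) < δ for every U ∈ 𝒰 and μ(X \ ⋃𝒰) < ε for all μ ∈ M_G(X). Then for every closed set F ⊆ X, every open set O ⊆ X with F ⊆ O, and every ε > 0, there is an open set V with F ⊆ V ⊆ cl(V) ⊆ O and μ(∂V) < ε for all μ ∈ M_G(X). -/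
open MeasureTheory Set Pointwise

variable (G X : Type*)

/-- Under the same hypothesis as Proposition 3.8, for every closed `F`, open
`O ⊇ F` and `ε > 0` there is an open `V` with `F ⊆ V ⊆ cl(V) ⊆ O` and `μ(∂V) < ε` for all
invariant measures `μ`. -/
theorem exists_open_sandwich_small_boundary
    {G X : Type*} [Group G] [Countable G]
    [MetricSpace X] [CompactSpace X]
    [MeasurableSpace X] [BorelSpace X]
    [MulAction G X] [ContinuousConstSMul G X]
    (h : ∀ δ > (0 : ℝ), ∀ ε > (0 : ℝ), ∃ 𝒰 : Set (Set X),
      (∀ U ∈ 𝒰, IsOpen U) ∧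
      (∀ U ∈ 𝒰, Metric.diam U < δ) ∧
      𝒰.Pairwise Disjoint ∧
      ∀ μ ∈ MG G X, (μ (Set.univ \ ⋃₀ 𝒰) : ℝ) < ε)
    (F O : Set X) (hF : IsClosed F) (hO : IsOpen O) (hFO : F ⊆ O)
    (ε : ℝ) (hε : 0 < ε) :
    ∃ V : Set X, IsOpen V ∧ F ⊆ V ∧ closure V ⊆ O ∧
      ∀ μ ∈ MG G X, (μ (frontier V) : ℝ) < ε := by
  obtain ⟨δ₀, hδ₀, hsub⟩ := (hF.isCompact).exists_cthickening_subset_open hO hFO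
  obtain ⟨𝒰, hopen, hdiam, hdisj, hmeas⟩ := h (δ₀/2) (by linarith) ε hε
  set W : Set X := Metric.thickening (δ₀/2) F with hW
  set V : Set X := W ∪ ⋃₀ {U ∈ 𝒰 | (U ∩ W).Nonempty} with hV
  have hVopen : IsOpen V := (Metric.isOpen_thickening).union
    (isOpen_sUnion fun U hU => hopen U hU.1)
  have hFV : F ⊆ V := (Metric.self_subset_thickening (by linarith) F).trans subset_union_left
  -- closure V ⊆ O
  have hVth : V ⊆ Metric.thickening δ₀ F := by
    rintro x (hx | hx)
    · exact Metric.thickening_mono (by linarith) F hx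
    · obtain ⟨U, ⟨hU𝒰, y, hyU, hyW⟩, hxU⟩ := hx
      obtain ⟨z, hzF, hyz⟩ := Metric.mem_thickening_iff.mp hyW
      refine Metric.mem_thickening_iff.mpr ⟨z, hzF, ?_⟩
      have hxy : dist x y ≤ Metric.diam U :=
        Metric.dist_le_diam_of_mem ((isCompact_univ.isBounded).subset (subset_univ U)) hxU hyU
      calc dist x z ≤ dist x y + dist y z := dist_triangle x y z
        _ < δ₀/2 + δ₀/2 := by have := hdiam U hU𝒰; linarith
        _ = δ₀ := by ring
  have hclV : closure V ⊆ O :=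
    ((closure_mono hVth).trans (Metric.closure_thickening_subset_cthickening δ₀ F)).trans hsub
  -- frontier V ⊆ univ \ ⋃₀ 𝒰
  have hfr : frontier V ⊆ Set.univ \ ⋃₀ 𝒰 := by
    intro x hx
    refine ⟨trivial, ?_⟩
    rintro ⟨U, hU𝒰, hxU⟩
    by_cases hUW : (U ∩ W).Nonempty
    · have hsubV : U ⊆ V := fun y hy => Or.inr ⟨U, ⟨hU𝒰, hUW⟩, hy⟩
      rw [hVopen.frontier_eq] at hx
      exact hx.2 (hsubV hxU)
    · have hUV : U ∩ V = ∅ := by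
        ext y; simp only [mem_inter_iff, mem_empty_iff_false, iff_false]
        rintro ⟨hyU, hyV | ⟨U', ⟨hU'𝒰, hU'W⟩, hyU'⟩⟩
        · exact hUW ⟨y, hyU, hyV⟩
        · rcases eq_or_ne U U' with rfl | hne
          · exact hUW hU'W
          · exact (hdisj hU𝒰 hU'𝒰 hne).le_bot ⟨hyU, hyU'⟩ |>.elim
      have hnc : x ∉ closure V := by
        rw [← disjoint_iff_inter_eq_empty] at hUV
        intro hxc
        obtain ⟨y, hyU, hyV⟩ := mem_closure_iff.mp hxc U (hopen U hU𝒰) hxU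
        exact hUV.le_bot ⟨hyU, hyV⟩ |>.elim
      exact hnc hx.1
  refine ⟨V, hVopen, hFV, hclV, fun μ hμ => ?_⟩
  have hle : μ (frontier V) ≤ μ (Set.univ \ ⋃₀ 𝒰) := μ.apply_mono hfr
  exact lt_of_le_of_lt (by exact_mod_cast hle) (hmeas μ hμ)
end

section
/- Let α: G ↷ X be a free continuous action of a countable discrete group G on a compact metrizable space X with compatible metric d, and let m ∈ ℕ. Then α is m-almost finite if and only if for every n ≥ 1, finite K ⊆ G and δ > 0 there is a finite collection of open towers {(S_i, V_i) : i ∈ I} such that each V_i is open, each S_i is (K,δ)-invariant, diam(s·V_i) < δ for every i ∈ I and s ∈ S_i, the family {S_i·V_i : i ∈ I} has chromatic number at most m+1, and there exist S'_i ⊆ S_i with |S'_i| ≤ |S_i|/n and X \ ⊔_{i∈I} S_i·V_i ≺ ⊔_{i∈I} S'_i·V_i. -/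
open MeasureTheory Set Pointwise

variable (G X : Type*)

section Aux

variable {G X : Type*} [Group G] [MetricSpace X] [CompactSpace X]
  [MulAction G X] [ContinuousConstSMul G X]

private lemma bounded_aux (A : Set X) : Bornology.IsBounded A :=
  isCompact_univ.isBounded.subset (Set.subset_univ _)

end Aux

/-- For a free action, `m`-almost finiteness (with closed tower levels) is
equivalent to the analogous condition in which all towers are open. -/
theorem mAlmostFinite_iff_open_towers
    {G X : Type*} [Group G] [Countable G]
    [MetricSpace X] [CompactSpace X]
    [MeasurableSpace X] [BorelSpace X]
    [MulAction G X] [ContinuousConstSMul G X]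
    (hfree : FreeAction G X) (m : ℕ) :
    MAlmostFinite G X m ↔
      (∀ (n : ℕ), 1 ≤ n → ∀ (K : Finset G) (δ : ℝ), 0 < δ →
        ∃ (I : ℕ) (S : Fin I → Finset G) (V : Fin I → Set X) (c : Fin I → Fin (m + 1))
          (S' : Fin I → Finset G),
          (∀ i, IsOpen (V i)) ∧
          (∀ i, IsTower G X (S i) (V i)) ∧
          (∀ i, FolnerInv G K δ (S i)) ∧
          (∀ i, ∀ s ∈ S i, Metric.diam (s • V i) < δ) ∧
          (∀ i j, i ≠ j → c i = c j →
            Disjoint ((S i : Set G) • V i) ((S j : Set G) • V j)) ∧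
          (∀ i, S' i ⊆ S i) ∧ (∀ i, ((S' i).card : ℝ) ≤ ((S i).card : ℝ) / n) ∧
          SubordinateM G X 0 (Set.univ \ ⋃ i, (S i : Set G) • V i)
            (⋃ i, (S' i : Set G) • V i)) := by
  classical
  constructor
  · -- closed towers ⇒ open towers (easy direction)
    intro h n hn K δ hδ
    obtain ⟨I, S, V, c, S', hVo, htow, hfol, hdiam, hdisj, hS'S, hcard, hord⟩ := h n hn K δ hδ
    refine ⟨I, S, V, c, S', hVo, ?_, hfol, ?_, ?_, hS'S, hcard, hord⟩
    · intro i s hs t ht hst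
      exact (htow i hs ht hst).mono (Set.smul_set_mono subset_closure)
        (Set.smul_set_mono subset_closure)
    · intro i s hs
      exact lt_of_le_of_lt
        (Metric.diam_mono (Set.smul_set_mono subset_closure) (bounded_aux _)) (hdiam i s hs)
    · intro i j hij hc
      exact (hdisj i j hij hc).mono (Set.smul_subset_smul_left subset_closure)
        (Set.smul_subset_smul_left subset_closure)
  · -- open towers ⇒ closed towers: shrink the towers
    intro h n hn K δ hδ
    obtain ⟨I, S, V, c, S', hVo, htow, hfol, hdiam, hdisj, hS'S, hcard, hord⟩ := h n hn K δ hδ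
    obtain ⟨N, U, g, c0, hUo, hUcov, hUsub, hUdisj⟩ := hord
    -- the big open cover to be shrunk
    set u : (Fin I × G) ⊕ (Fin N × Fin I × G) → Set X :=
      Sum.elim (fun p => if p.2 ∈ S p.1 then p.2 • V p.1 else (∅ : Set X))
        (fun q => if q.2.2 ∈ S' q.2.1 then U q.1 ∩ (g q.1)⁻¹ • (q.2.2 • V q.2.1)
          else (∅ : Set X)) with hu
    have huo : ∀ a, IsOpen (u a) := by
      rintro (⟨i, s⟩ | ⟨k, i, s⟩)
      · simp only [hu, Sum.elim_inl]
        split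
        · exact (hVo i).smul s
        · exact isOpen_empty
      · simp only [hu, Sum.elim_inr]
        split
        · exact (hUo k).inter (((hVo i).smul s).smul _)
        · exact isOpen_empty
    have hucov : (Set.univ : Set X) ⊆ ⋃ a, u a := by
      intro x _
      by_cases hx : x ∈ ⋃ i, (S i : Set G) • V i
      · rw [Set.mem_iUnion] at hx
        obtain ⟨i, hi⟩ := hx
        obtain ⟨t, ht, y, hy, rfl⟩ := hi
        refine Set.mem_iUnion.mpr ⟨Sum.inl (i, t), ?_⟩
        simp only [hu, Sum.elim_inl]
        rw [if_pos (Finset.mem_coe.mp ht)]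
        exact Set.smul_mem_smul_set hy
      · have hxU : x ∈ ⋃ k, U k := hUcov ⟨Set.mem_univ x, hx⟩
        rw [Set.mem_iUnion] at hxU
        obtain ⟨k, hk⟩ := hxU
        have hgx : g k • x ∈ ⋃ i, (S' i : Set G) • V i := hUsub k (Set.smul_mem_smul_set hk)
        rw [Set.mem_iUnion] at hgx
        obtain ⟨i, hi⟩ := hgx
        obtain ⟨t, ht, y, hy, hxy⟩ := hi
        refine Set.mem_iUnion.mpr ⟨Sum.inr (k, i, t), ?_⟩
        simp only [hu, Sum.elim_inr]
        rw [if_pos (Finset.mem_coe.mp ht)]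
        refine ⟨hk, ?_⟩
        rw [Set.mem_inv_smul_set_iff, ← hxy]
        exact Set.smul_mem_smul_set hy
    have hufin : ∀ x ∈ (Set.univ : Set X), {a | x ∈ u a}.Finite := by
      intro x _
      apply Set.Finite.subset
        (s := Sum.inl '' {p : Fin I × G | p.2 ∈ S p.1}
          ∪ Sum.inr '' {q : Fin N × Fin I × G | q.2.2 ∈ S' q.2.1})
      · apply Set.Finite.union
        · apply Set.Finite.image
          have hsub1 : {p : Fin I × G | p.2 ∈ S p.1} ⊆
              ⋃ i : Fin I, (fun s => (i, s)) '' (S i : Set G) := by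
            rintro ⟨i, s⟩ hs
            exact Set.mem_iUnion.mpr ⟨i, ⟨s, hs, rfl⟩⟩
          exact Set.Finite.subset
            (Set.finite_iUnion fun i => (S i).finite_toSet.image _) hsub1
        · apply Set.Finite.image
          have hsub2 : {q : Fin N × Fin I × G | q.2.2 ∈ S' q.2.1} ⊆
              ⋃ k : Fin N, ⋃ i : Fin I, (fun s => (k, i, s)) '' (S' i : Set G) := by
            rintro ⟨k, i, s⟩ hs
            exact Set.mem_iUnion.mpr ⟨k, Set.mem_iUnion.mpr ⟨i, ⟨s, hs, rfl⟩⟩⟩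
          exact Set.Finite.subset
            (Set.finite_iUnion fun k =>
              Set.finite_iUnion fun i => (S' i).finite_toSet.image _) hsub2
      · rintro (⟨i, s⟩ | ⟨k, i, s⟩) hxa
        · by_cases hs : s ∈ S i
          · exact Or.inl ⟨(i, s), hs, rfl⟩
          · exfalso
            simp only [Set.mem_setOf_eq, hu, Sum.elim_inl, hs, if_false,
              Set.mem_empty_iff_false] at hxa
        · by_cases hs : s ∈ S' i
          · exact Or.inr ⟨(k, i, s), hs, rfl⟩
          · exfalso
            simp only [Set.mem_setOf_eq, hu, Sum.elim_inr, hs, if_false,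
              Set.mem_empty_iff_false] at hxa
    -- shrink
    obtain ⟨v, hvcov, hvo, hvcl⟩ :=
      exists_subset_iUnion_closure_subset isClosed_univ huo hufin hucov
    -- the new tower bases
    set Wb : Fin I → G → Set X := fun i s =>
      v (Sum.inl (i, s)) ∪ ⋃ k : Fin N, g k • v (Sum.inr (k, i, s)) with hWbdef
    set W : Fin I → Set X := fun i => ⋃ s ∈ (S i : Set G), s⁻¹ • Wb i s with hWdef
    have hA : ∀ (i : Fin I), ∀ s ∈ S i, closure (Wb i s) ⊆ s • V i := by
      intro i s hs
      have hcl : closure (Wb i s) ⊆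
          closure (v (Sum.inl (i, s))) ∪
            ⋃ k : Fin N, g k • closure (v (Sum.inr (k, i, s))) := by
        apply closure_minimal
        · exact Set.union_subset_union subset_closure
            (Set.iUnion_mono fun k => Set.smul_set_mono subset_closure)
        · exact isClosed_closure.union
            (isClosed_iUnion_of_finite fun k => isClosed_closure.smul (g k))
      refine hcl.trans (Set.union_subset ?_ ?_)
      · have h1 := hvcl (Sum.inl (i, s))
        simp only [hu, Sum.elim_inl, hs, if_true] at h1
        exact h1
      · refine Set.iUnion_subset fun k => ?_
        by_cases hs' : s ∈ S' i
        · have h2 := hvcl (Sum.inr (k, i, s))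
          simp only [hu, Sum.elim_inr, hs', if_true] at h2
          calc g k • closure (v (Sum.inr (k, i, s)))
              ⊆ g k • ((g k)⁻¹ • (s • V i)) :=
                Set.smul_set_mono (h2.trans Set.inter_subset_right)
            _ = s • V i := smul_inv_smul _ _
        · have h2 := hvcl (Sum.inr (k, i, s))
          simp only [hu, Sum.elim_inr, hs', if_false] at h2
          rintro x ⟨y, hy, rfl⟩
          exact absurd (h2 hy) (Set.notMem_empty y)
    have hWsub : ∀ i, closure (W i) ⊆ V i := by
      intro i
      have h1 : closure (W i) ⊆ ⋃ s ∈ (S i : Set G), s⁻¹ • closure (Wb i s) := by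
        apply closure_minimal
        · exact Set.iUnion₂_mono fun s _ => Set.smul_set_mono subset_closure
        · exact (S i).finite_toSet.isClosed_biUnion fun s _ => isClosed_closure.smul _
      refine h1.trans (Set.iUnion₂_subset fun s hs => ?_)
      have h2 := Set.smul_set_mono (a := s⁻¹) (hA i s (Finset.mem_coe.mp hs))
      rwa [inv_smul_smul] at h2
    have hWbW : ∀ (i : Fin I), ∀ s ∈ (S i : Set G), Wb i s ⊆ s • W i := by
      intro i s hs
      have h1 : s⁻¹ • Wb i s ⊆ W i := by
        rw [hWdef]
        exact Set.subset_biUnion_of_mem (u := fun t => t⁻¹ • Wb i t) hs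
      have h2 := Set.smul_set_mono (a := s) h1
      rwa [smul_inv_smul] at h2
    have hWo : ∀ i, IsOpen (W i) := fun i =>
      isOpen_biUnion fun s _ =>
        (((hvo _).union (isOpen_iUnion fun k => (hvo _).smul _)).smul _)
    have hvU : ∀ (k : Fin N),
        (⋃ i : Fin I, ⋃ s : G, v (Sum.inr (k, i, s))) ⊆ U k := by
      intro k
      refine Set.iUnion_subset fun i => Set.iUnion_subset fun s => ?_
      have h2 := hvcl (Sum.inr (k, i, s))
      by_cases hs' : s ∈ S' i
      · simp only [hu, Sum.elim_inr, hs', if_true] at h2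
        exact subset_closure.trans (h2.trans Set.inter_subset_left)
      · simp only [hu, Sum.elim_inr, hs', if_false] at h2
        intro x hxv
        exact absurd (h2 (subset_closure hxv)) (Set.notMem_empty x)
    refine ⟨I, S, W, c, S', hWo, ?_, hfol, ?_, ?_, hS'S, hcard, ?_⟩
    · intro i s hs t ht hst
      exact (htow i hs ht hst).mono (Set.smul_set_mono (hWsub i))
        (Set.smul_set_mono (hWsub i))
    · intro i s hs
      exact lt_of_le_of_lt
        (Metric.diam_mono (Set.smul_set_mono (hWsub i)) (bounded_aux _)) (hdiam i s hs)
    · intro i j hij hc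
      exact (hdisj i j hij hc).mono (Set.smul_subset_smul_left (hWsub i))
        (Set.smul_subset_smul_left (hWsub j))
    · refine ⟨N, fun k => ⋃ i : Fin I, ⋃ s : G, v (Sum.inr (k, i, s)), g,
        fun _ => 0, ?_, ?_, ?_, ?_⟩
      · intro k
        exact isOpen_iUnion fun i => isOpen_iUnion fun s => hvo _
      · rintro x ⟨-, hx⟩
        have hxcov := hvcov (Set.mem_univ x)
        rw [Set.mem_iUnion] at hxcov
        obtain ⟨a, ha⟩ := hxcov
        obtain (⟨i, s⟩ | ⟨k, i, s⟩) := a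
        · exfalso
          by_cases hs : s ∈ S i
          · refine hx (Set.mem_iUnion.mpr ⟨i, ?_⟩)
            exact Set.smul_set_subset_smul (Finset.mem_coe.mpr hs)
              (hWbW i s (Finset.mem_coe.mpr hs) (Set.subset_union_left ha))
          · have h1 := hvcl (Sum.inl (i, s)) (subset_closure ha)
            simp only [hu, Sum.elim_inl, hs, if_false] at h1
            exact h1
        · exact Set.mem_iUnion.mpr
            ⟨k, Set.mem_iUnion.mpr ⟨i, Set.mem_iUnion.mpr ⟨s, ha⟩⟩⟩
      · intro k
        rw [Set.smul_set_iUnion]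
        refine Set.iUnion_subset fun i => ?_
        rw [Set.smul_set_iUnion]
        refine Set.iUnion_subset fun s => ?_
        by_cases hs' : s ∈ S' i
        · have h1 : g k • v (Sum.inr (k, i, s)) ⊆ Wb i s :=
            (Set.subset_iUnion (fun k' => g k' • v (Sum.inr (k', i, s))) k).trans
              Set.subset_union_right
          have h2 : Wb i s ⊆ s • W i := hWbW i s (Finset.mem_coe.mpr (hS'S i hs'))
          refine ((h1.trans h2).trans ?_)
          exact (Set.smul_set_subset_smul (Finset.mem_coe.mpr hs')).trans
            (Set.subset_iUnion (fun i' => (S' i' : Set G) • W i') i)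
        · have h2 := hvcl (Sum.inr (k, i, s))
          simp only [hu, Sum.elim_inr, hs', if_false] at h2
          rintro x ⟨y, hy, rfl⟩
          exact absurd (h2 (subset_closure hy)) (Set.notMem_empty y)
      · intro k l hkl _
        have hc0 : c0 k = c0 l := by
          have h1 := (c0 k).isLt
          have h2 := (c0 l).isLt
          exact Fin.ext (by omega)
        exact (hUdisj k l hkl hc0).mono
          (Set.smul_set_mono (hvU k)) (Set.smul_set_mono (hvU l))
end

section
/- Let α: G ↷ X be a continuous action of a countable discrete group G on a compact metrizable space X, let m ∈ ℕ, let F ⊆ X be closed, and let {(S_i, V_i) : i ∈ I} be a castle. Suppose that for each i ∈ I, S'_{i,0}, S'_{i,1}, …, S'_{i,m} are pairwise disjoint subsets of S_i all having the same cardinality. If F ≺_m ⊔_{i∈I} S'_{i,0}·V_i, then F ≺ ⊔_{i∈I} S'_i·V_i, where S'_i = ⊔_{j=0}^m S'_{i,j}. -/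
open MeasureTheory Set Pointwise

variable (G X : Type*)

/-- If `{(S_i, V_i)}` is an open castle, the sets `S'_{i,0}, …, S'_{i,m}` are
pairwise disjoint subsets of `S_i` of equal cardinality, and `F ≺_m ⊔_i S'_{i,0} · V_i`,
then `F ≺ ⊔_i S'_i · V_i` where `S'_i = ⊔_{j=0}^m S'_{i,j}`. -/
theorem subordinate_of_subordinateM_castle
    {G X : Type*} [Group G] [Countable G]
    [MetricSpace X] [CompactSpace X]
    [MulAction G X] [ContinuousConstSMul G X]
    (m : ℕ) (F : Set X) (hF : IsClosed F)
    (I : ℕ) (S : Fin I → Finset G) (V : Fin I → Set X)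
    (hV : ∀ i, IsOpen (V i))
    (htower : ∀ i, IsTower G X (S i) (V i))
    (hcastle : ∀ i j, i ≠ j → Disjoint ((S i : Set G) • V i) ((S j : Set G) • V j))
    (S' : Fin I → Fin (m + 1) → Finset G)
    (hsub : ∀ i j, S' i j ⊆ S i)
    (hdisj : ∀ i, ∀ j j', j ≠ j' → Disjoint (S' i j : Set G) (S' i j' : Set G))
    (hcard : ∀ i j j', (S' i j).card = (S' i j').card)
    (h : SubordinateM G X m F (⋃ i, (S' i 0 : Set G) • V i)) :
    SubordinateM G X 0 F (⋃ i, (⋃ j, (S' i j : Set G)) • V i) := by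
  classical
  obtain ⟨n, U, s, c, hUopen, hFcov, himg, hdis⟩ := h
  -- bijections between S' i 0 and S' i j
  have σ : ∀ (i : Fin I) (j : Fin (m+1)), (S' i 0 : Finset G) ≃ (S' i j : Finset G) :=
    fun i j => Finset.equivOfCardEq (hcard i 0 j)
  set ι := Fin n × Σ i : Fin I, {t : G // t ∈ S' i 0} with hι
  let e : Fin (Fintype.card ι) ≃ ι := (Fintype.equivFin ι).symm
  -- refined data
  let U' : ι → Set X := fun p => U p.1 ∩ (s p.1)⁻¹ • ((p.2.2 : G) • V p.2.1)
  let g' : ι → G := fun p => (σ p.2.1 (c p.1) p.2.2 : G) * (p.2.2 : G)⁻¹ * s p.1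
  have hsubV : ∀ p : ι, g' p • U' p ⊆ (σ p.2.1 (c p.1) p.2.2 : G) • V p.2.1 := by
    intro p
    calc g' p • U' p
        ⊆ g' p • ((s p.1)⁻¹ • ((p.2.2 : G) • V p.2.1)) :=
          Set.smul_set_mono Set.inter_subset_right
      _ = (σ p.2.1 (c p.1) p.2.2 : G) • V p.2.1 := by
          simp only [g', smul_smul]; group
  refine ⟨Fintype.card ι, fun k => U' (e k), fun k => g' (e k), fun _ => 0, ?_, ?_, ?_, ?_⟩
  · intro k
    exact (hUopen _).inter (((hV _).smul _).smul _)
  · intro x hx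
    obtain ⟨_, ⟨k, rfl⟩, hk⟩ := hFcov hx
    have := himg k (Set.smul_mem_smul_set hk)
    obtain ⟨_, ⟨i, rfl⟩, hmem⟩ := this
    rw [Set.mem_smul] at hmem
    obtain ⟨t, ht, v, hv, hvx⟩ := hmem
    refine Set.mem_iUnion.mpr ⟨e.symm ⟨k, ⟨i, ⟨t, ht⟩⟩⟩, ?_⟩
    simp only [Equiv.apply_symm_apply]
    refine ⟨hk, ?_⟩
    rw [Set.mem_smul_set_iff_inv_smul_mem, inv_inv]
    exact ⟨v, hv, hvx⟩
  · suffices H : ∀ p : ι, g' p • U' p ⊆ ⋃ i, (⋃ j, (S' i j : Set G)) • V i from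
      fun k => H (e k)
    intro p
    refine (hsubV p).trans ?_
    refine (Set.smul_set_subset_smul ?_).trans
      (Set.subset_iUnion (fun i => (⋃ j, (S' i j : Set G)) • V i) p.2.1)
    exact Set.mem_iUnion.mpr ⟨c p.1, (σ p.2.1 (c p.1) p.2.2).2⟩
  · suffices H : ∀ p q : ι, p ≠ q → Disjoint (g' p • U' p) (g' q • U' q) from
      fun k l hkl _ => H (e k) (e l) fun hh => hkl (e.injective hh)
    rintro ⟨k1, ⟨i1, t1⟩⟩ ⟨k2, ⟨i2, t2⟩⟩ hpq
    by_cases hi : i1 = i2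
    · subst hi
      by_cases ha : (σ i1 (c k1) t1 : G) = (σ i1 (c k2) t2 : G)
      · -- same target translate: must have same color, same t, different k
        have hc : c k1 = c k2 := by
          by_contra hc
          exact (hdisj i1 (c k1) (c k2) hc).le_bot
            ⟨(σ i1 (c k1) t1).2, ha ▸ (σ i1 (c k2) t2).2⟩
        have ht : t1 = t2 := by
          apply (σ i1 (c k1)).injective
          apply Subtype.ext
          rw [ha, hc]
        have hk12 : k1 ≠ k2 := fun hk12 => hpq (by rw [hk12, ht])
        have key : (σ i1 (c k1) t1 : G) * (t1 : G)⁻¹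
            = (σ i1 (c k2) t2 : G) * (t2 : G)⁻¹ := by rw [ha, ht]
        have hd := hdis k1 k2 hk12 hc
        have hd' : Disjoint (((σ i1 (c k1) t1 : G) * (t1 : G)⁻¹) • (s k1 • U k1))
            (((σ i1 (c k1) t1 : G) * (t1 : G)⁻¹) • (s k2 • U k2)) :=
          Set.disjoint_smul_set.mpr hd
        refine hd'.mono ?_ ?_
        · calc g' (k1, ⟨i1, t1⟩) • U' (k1, ⟨i1, t1⟩)
              ⊆ g' (k1, ⟨i1, t1⟩) • U k1 := Set.smul_set_mono Set.inter_subset_left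
            _ = ((σ i1 (c k1) t1 : G) * (t1 : G)⁻¹) • (s k1 • U k1) := by
                simp only [g', smul_smul]
        · calc g' (k2, ⟨i1, t2⟩) • U' (k2, ⟨i1, t2⟩)
              ⊆ g' (k2, ⟨i1, t2⟩) • U k2 := Set.smul_set_mono Set.inter_subset_left
            _ = ((σ i1 (c k1) t1 : G) * (t1 : G)⁻¹) • (s k2 • U k2) := by
                rw [key]; simp only [g', smul_smul]
      · -- different elements of the same tower: use tower disjointness
        have hmem1 : (σ i1 (c k1) t1 : G) ∈ (S i1 : Set G) := hsub i1 (c k1) (σ i1 (c k1) t1).2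
        have hmem2 : (σ i1 (c k2) t2 : G) ∈ (S i1 : Set G) := hsub i1 (c k2) (σ i1 (c k2) t2).2
        exact (htower i1 hmem1 hmem2 ha).mono (hsubV (k1, ⟨i1, t1⟩)) (hsubV (k2, ⟨i1, t2⟩))
    · -- different towers: use castle disjointness
      refine (hcastle i1 i2 hi).mono ?_ ?_
      · exact (hsubV (k1, ⟨i1, t1⟩)).trans
          (Set.smul_set_subset_smul (hsub i1 (c k1) (σ i1 (c k1) t1).2))
      · exact (hsubV (k2, ⟨i2, t2⟩)).trans
          (Set.smul_set_subset_smul (hsub i2 (c k2) (σ i2 (c k2) t2).2))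
end
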